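/- Let d ≥ 1 and let w₁, w₂, …, w_k be non-trivial elements of the free group F_d of rank d. Then there exists a non-trivial element w ∈ F_d such that for every group G, every index 1 ≤ i ≤ k, and every d-tuple (x₁, …, x_d) of elements of G, if w_i evaluates to the identity at (x₁, …, x_d) then w also evaluates to the identity at (x₁, …, x_d). -/

import Mathlib

/-- Distinct generators of a free group do not commute. -/
lemma freeGroup_of_not_commute {S : Type*} {s t : S} (h : s ≠ t) :
    FreeGroup.of s * FreeGroup.of t ≠ FreeGroup.of t * FreeGroup.of s := by
  classical
  intro hc
  let f : S → Equiv.Perm (Fin 3) := fun x => if x = s then Equiv.swap 0 1 else Equiv.swap 1 2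
  have h2 := congrArg (FreeGroup.lift f) hc
  simp only [map_mul, FreeGroup.lift_apply_of, f, if_pos rfl, if_neg (Ne.symm h)] at h2
  have h3 : (Equiv.swap 0 1 : Equiv.Perm (Fin 3)) * Equiv.swap 1 2 ≠
      Equiv.swap 1 2 * Equiv.swap 0 1 := by decide
  exact h3 h2

/-- In a free group on a subsingleton type, every element is a power of the generator. -/
lemma freeGroup_subsingleton_pow {S : Type*} [Subsingleton S] (s : S) (x : FreeGroup S) :
    ∃ n : ℤ, x = FreeGroup.of s ^ n := by
  induction x with
  | C1 => exact ⟨0, by simp⟩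
  | of t => exact ⟨1, by rw [Subsingleton.elim t s, zpow_one]⟩
  | inv_of t ih => obtain ⟨n, hn⟩ := ih; exact ⟨-n, by rw [hn, zpow_neg]⟩
  | mul x y hx hy =>
      obtain ⟨n, hn⟩ := hx; obtain ⟨m, hm⟩ := hy
      exact ⟨n + m, by rw [hn, hm, zpow_add]⟩

lemma freeGroup_of_zpow_ne_one {S : Type*} (s : S) {n : ℤ} (hn : n ≠ 0) :
    (FreeGroup.of s ^ n : FreeGroup S) ≠ 1 := by
  intro h
  have := congrArg (FreeGroup.lift (fun _ : S => Multiplicative.ofAdd (1 : ℤ))) h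
  simp only [map_zpow, FreeGroup.lift_apply_of, map_one] at this
  rw [← ofAdd_zsmul, smul_eq_mul, mul_one] at this
  exact hn (by exact_mod_cast Multiplicative.ofAdd.injective (this.trans rfl))

/-- Commuting nontrivial elements of a free group have a common nontrivial power. -/
lemma commute_exists_common_pow {α : Type*} {u v : FreeGroup α} (hu : u ≠ 1) (hv : v ≠ 1)
    (h : Commute u v) : ∃ a b : ℤ, u ^ b = v ^ a ∧ u ^ b ≠ 1 := by
  classical
  set H : Subgroup (FreeGroup α) := Subgroup.closure {u, v} with hH
  have huH : u ∈ H := Subgroup.subset_closure (by simp)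
  have hvH : v ∈ H := Subgroup.subset_closure (by simp)
  -- H is commutative
  have hcomm : ∀ x ∈ H, ∀ y ∈ H, x * y = y * x := by
    have hcent : H ≤ Subgroup.centralizer {u, v} := by
      rw [hH, Subgroup.closure_le]
      rintro z (rfl | rfl) <;> rw [SetLike.mem_coe, Subgroup.mem_centralizer_iff] <;>
        rintro g (rfl | rfl) <;> simp [h.eq]
    intro x hx y hy
    have hx' := Subgroup.mem_centralizer_iff.mp (hcent hx)
    have hle : H ≤ Subgroup.centralizer {x} := by
      rw [hH, Subgroup.closure_le]
      rintro z (rfl | rfl) <;> rw [SetLike.mem_coe, Subgroup.mem_centralizer_iff] <;>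
        · rintro g rfl
          exact (hx' _ (by simp)).symm
    have hy' := Subgroup.mem_centralizer_iff.mp (hle hy)
    exact hy' x (by simp)
  let e : H ≃* FreeGroup (IsFreeGroup.Generators H) := IsFreeGroup.toFreeGroup H
  -- Generators are subsingleton
  haveI : Subsingleton (IsFreeGroup.Generators H) := by
    constructor
    intro s t
    by_contra hst
    apply freeGroup_of_not_commute hst
    have : e.symm (FreeGroup.of s) * e.symm (FreeGroup.of t)
        = e.symm (FreeGroup.of t) * e.symm (FreeGroup.of s) := by
      ext
      exact hcomm _ (e.symm (FreeGroup.of s)).2 _ (e.symm (FreeGroup.of t)).2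
    have := congrArg e this
    simpa using this
  set U : H := ⟨u, huH⟩ with hU
  set V : H := ⟨v, hvH⟩ with hV
  have hU1 : U ≠ 1 := fun hh => hu (by simpa [hU, Subtype.ext_iff] using hh)
  have hV1 : V ≠ 1 := fun hh => hv (by simpa [hV, Subtype.ext_iff] using hh)
  -- get a generator
  have hne : Nonempty (IsFreeGroup.Generators H) := by
    by_contra hempty
    rw [not_nonempty_iff] at hempty
    apply hU1
    apply e.injective
    rw [_root_.map_one, ← FreeGroup.toWord_eq_nil_iff]
    cases h1 : (e U).toWord with
    | nil => rfl
    | cons p l => exact (hempty.false p.1).elim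
  obtain ⟨s⟩ := hne
  obtain ⟨a, ha⟩ := freeGroup_subsingleton_pow s (e U)
  obtain ⟨b, hb⟩ := freeGroup_subsingleton_pow s (e V)
  have ha0 : a ≠ 0 := by
    rintro rfl
    exact hU1 (e.injective (by simpa using ha))
  have hb0 : b ≠ 0 := by
    rintro rfl
    exact hV1 (e.injective (by simpa using hb))
  refine ⟨a, b, ?_, ?_⟩
  · have : e (U ^ b) = e (V ^ a) := by
      rw [map_zpow, map_zpow, ha, hb, ← zpow_mul, ← zpow_mul, mul_comm]
    have := e.injective this
    have := congrArg (Subtype.val) this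
    simpa using this
  · intro hc
    have : U ^ b = 1 := Subtype.ext (by rw [SubgroupClass.coe_zpow]; exact hc)
    apply freeGroup_of_zpow_ne_one s (mul_ne_zero ha0 hb0)
    calc FreeGroup.of s ^ (a * b) = (FreeGroup.of s ^ a) ^ b := by rw [zpow_mul]
    _ = e (U ^ b) := by rw [map_zpow, ha]
    _ = 1 := by rw [this, _root_.map_one]

/-- Combining step: two nontrivial words have a common nontrivial consequence. -/
lemma combine_words {d : ℕ} (u v : FreeGroup (Fin d)) (hu : u ≠ 1) (hv : v ≠ 1) :
    ∃ w : FreeGroup (Fin d), w ≠ 1 ∧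
      (∀ (G : Type*) [Group G] (φ : FreeGroup (Fin d) →* G), φ u = 1 → φ w = 1) ∧
      (∀ (G : Type*) [Group G] (φ : FreeGroup (Fin d) →* G), φ v = 1 → φ w = 1) := by
  by_cases hc : ∃ g : FreeGroup (Fin d), u * (g * v * g⁻¹) ≠ (g * v * g⁻¹) * u
  · obtain ⟨g, hg⟩ := hc
    refine ⟨u * (g * v * g⁻¹) * u⁻¹ * (g * v * g⁻¹)⁻¹, ?_, ?_, ?_⟩
    · intro hw
      apply hg
      rw [← mul_inv_eq_one]
      group
      group at hw
      convert hw using 1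
    · intro G _ φ hφ
      simp only [_root_.map_mul, _root_.map_inv, hφ]
      group
    · intro G _ φ hφ
      simp only [_root_.map_mul, _root_.map_inv, hφ]
      group
  · push_neg at hc
    have hcomm : Commute u v := by
      have := hc 1
      simpa [Commute, SemiconjBy] using this
    obtain ⟨a, b, hab, hne⟩ := commute_exists_common_pow hu hv hcomm
    refine ⟨u ^ b, hne, ?_, ?_⟩
    · intro G _ φ hφ
      rw [map_zpow, hφ, one_zpow]
    · intro G _ φ hφ
      rw [hab, map_zpow, hφ, one_zpow]

/-- Given non-trivial words `w₁, …, w_k` in the free group of rank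
`d ≥ 1`, there is a non-trivial word `w ∈ F_d` such that for every group `G` and every
`d`-tuple of elements of `G`, if some `w_i` evaluates to the identity at the tuple then
so does `w`. -/
theorem exists_common_consequence_word (d k : ℕ) (hd : 1 ≤ d)
    (ws : Fin k → FreeGroup (Fin d)) (hws : ∀ i, ws i ≠ 1) :
    ∃ w : FreeGroup (Fin d), w ≠ 1 ∧
      ∀ (G : Type*) [Group G] (i : Fin k) (x : Fin d → G),
        FreeGroup.lift x (ws i) = 1 → FreeGroup.lift x w = 1 := by
  induction k with
  | zero =>
      exact ⟨FreeGroup.of ⟨0, hd⟩, FreeGroup.of_ne_one _, fun G _ i x => i.elim0⟩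
  | succ k ih =>
      obtain ⟨w', hw', hcons⟩ := ih (fun i => ws i.succ) (fun i => hws i.succ)
      obtain ⟨w, hw, h1, h2⟩ := combine_words (ws 0) w' (hws 0) hw'
      refine ⟨w, hw, fun G _ i x hx => ?_⟩
      refine Fin.cases (fun hx => ?_) (fun j hx => ?_) i hx
      · exact h1 G (FreeGroup.lift x) hx
      · exact h2 G (FreeGroup.lift x) (hcons G j x hx)
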